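/- Let X be an n × M real matrix with XᵀX invertible whose 0-th column is the all-ones vector, i.e. X e₀ = 𝟙, and define β̂(y) = (XᵀX)⁻¹ Xᵀ y. Let K ≥ 2, r : Fin n → Fin K, l̃ : Fin K → ℝ, r̃ i = l̃ (r i), and d_k i = 1 if r i ≤ k else 0. Then for every coefficient index m ≠ 0, the m-th coordinate satisfies β̂(r̃)_m = ∑_{k=0}^{K−2} (l̃ k − l̃ (k+1)) · β̂(d_k)_m. -/

import Mathlib

open Matrix

/-- The OLS coefficient map `β̂(y) = (XᵀX)⁻¹ Xᵀ y`. -/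
noncomputable def olsCoef {n M : ℕ} (X : Matrix (Fin n) (Fin M) ℝ) (y : Fin n → ℝ) :
    Fin M → ℝ :=
  (Xᵀ * X)⁻¹ *ᵥ (Xᵀ *ᵥ y)

private lemma telescope_Ico (f : ℕ → ℝ) (a b : ℕ) (hab : a ≤ b) :
    ∑ k ∈ Finset.Ico a b, (f k - f (k + 1)) = f a - f b := by
  induction b with
  | zero => simp_all
  | succ b ih =>
    rcases Nat.lt_or_ge a (b + 1) with h | h
    · have ha : a ≤ b := by omega
      rw [Finset.sum_Ico_succ_top ha, ih ha]; ring
    · have : a = b + 1 := by omega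
      subst this; simp

/-- If the design matrix contains a constant regressor (its 0-th
column is the all-ones vector, i.e. `X e₀ = 𝟙`), then for every coefficient index
`m ≠ 0` the OLS coefficient of the transformed outcome is a weighted sum of the
dichotomized OLS coefficients, with no constant term. -/
theorem stmt_2 (n M K : ℕ) [NeZero M] (hK : 2 ≤ K)
    (X : Matrix (Fin n) (Fin M) ℝ) (hX : IsUnit (Xᵀ * X))
    (hcol : X *ᵥ Pi.single (0 : Fin M) 1 = fun _ => (1 : ℝ))
    (r : Fin n → Fin K) (l : Fin K → ℝ) :
    ∀ m : Fin M, m ≠ 0 →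
      olsCoef X (fun i => l (r i)) m =
        ∑ k : Fin (K - 1),
          (l (Fin.castLE (by omega) k) - l (Fin.cast (by omega) k.succ)) *
            olsCoef X (fun i => if (r i : ℕ) ≤ (k : ℕ) then (1 : ℝ) else 0) m := by
  intro m hm
  have hKpos : 0 < K := by omega
  set A : Matrix (Fin M) (Fin n) ℝ := (Xᵀ * X)⁻¹ * Xᵀ with hA
  have hols : ∀ y : Fin n → ℝ, olsCoef X y = A.mulVecLin y := by
    intro y
    simp only [olsCoef, Matrix.mulVecLin_apply, hA, Matrix.mulVec_mulVec]
  -- the OLS coefficient of the all-ones outcome is e₀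
  have hone : olsCoef X (fun _ => (1 : ℝ)) = Pi.single (0 : Fin M) 1 := by
    rw [hols, Matrix.mulVecLin_apply, hA, ← hcol, Matrix.mulVec_mulVec,
      Matrix.mul_assoc, Matrix.nonsing_inv_mul _ ((Matrix.isUnit_iff_isUnit_det _).mp hX),
      Matrix.one_mulVec]
  -- top index of Fin K
  set top : Fin K := ⟨K - 1, by omega⟩ with htop
  -- pointwise decomposition of the outcome
  have hy : (fun i => l (r i)) =
      (∑ k : Fin (K - 1),
        (l (Fin.castLE (by omega) k) - l (Fin.cast (by omega) k.succ)) •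
          fun i => if (r i : ℕ) ≤ (k : ℕ) then (1 : ℝ) else 0)
      + (l top) • (fun _ => (1 : ℝ)) := by
    funext i
    set f : ℕ → ℝ := fun t => l ⟨min t (K - 1), by omega⟩ with hf
    have hsum : ∑ k : Fin (K - 1),
        (l (Fin.castLE (by omega) k) - l (Fin.cast (by omega) k.succ)) *
          (if (r i : ℕ) ≤ (k : ℕ) then (1 : ℝ) else 0)
        = l (r i) - l top := by
      have h1 : ∀ k : Fin (K - 1),
          (l (Fin.castLE (by omega) k) - l (Fin.cast (by omega) k.succ)) *
            (if (r i : ℕ) ≤ (k : ℕ) then (1 : ℝ) else 0)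
          = (if (r i : ℕ) ≤ (k : ℕ) then f (k : ℕ) - f ((k : ℕ) + 1) else 0) := by
        intro k
        have hk : (k : ℕ) < K - 1 := k.isLt
        have e1 : f (k : ℕ) = l (Fin.castLE (by omega) k) := by
          simp only [hf]
          exact congrArg l (Fin.ext (by first | (simp [Fin.castLE]; omega) | simp [Fin.castLE]))
        have e2 : f ((k : ℕ) + 1) = l (Fin.cast (by omega) k.succ) := by
          simp only [hf]
          exact congrArg l (Fin.ext (by first | (simp; omega) | simp))
        rw [e1, e2]
        split <;> simp
      rw [Finset.sum_congr rfl (fun k _ => h1 k),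
        Fin.sum_univ_eq_sum_range (fun k => if (r i : ℕ) ≤ k then f k - f (k + 1) else 0),
        ← Finset.sum_filter]
      have hfil : (Finset.range (K - 1)).filter (fun k => (r i : ℕ) ≤ k)
          = Finset.Ico (r i : ℕ) (K - 1) := by
        ext x
        simp [Finset.mem_filter, Finset.mem_Ico, Finset.mem_range, and_comm]
      rw [hfil, telescope_Ico f _ _ (by have := (r i).isLt; omega)]
      have er : f (r i : ℕ) = l (r i) :=
        congrArg l (Fin.ext (by have := (r i).isLt; simp; omega))
      have et : f (K - 1) = l top := congrArg l (Fin.ext (by simp [htop]))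
      rw [er, et]
    simp only [Pi.add_apply, Pi.smul_apply, Finset.sum_apply, smul_eq_mul, mul_one]
    rw [hsum]; ring
  -- linearity
  rw [hols, hy, map_add, _root_.map_smul, map_sum]
  simp only [Pi.add_apply, Pi.smul_apply, Finset.sum_apply, smul_eq_mul]
  have h0 : A.mulVecLin (fun _ => (1 : ℝ)) m = 0 := by
    rw [← hols, hone, Pi.single_apply, if_neg hm]
  rw [h0, mul_zero, add_zero]
  refine Finset.sum_congr rfl (fun k _ => ?_)
  rw [_root_.map_smul, hols]
  rfl
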